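/- Let n ≥ 1, let Pₙ be the path graph on vertices Δ = {α₁,…,αₙ}, and let J₀ ⊆ Δ. Let U ⊆ W be admissible subsets in Λ*(Pₙ,J₀). Then the interval [U,W] in Λ*(Pₙ,J₀) is relatively complemented if and only if there does not exist a vertex α ∈ J₀ such that α ∈ W − U and α is not adjacent in Pₙ to any vertex of U. -/

import Mathlib

open SimpleGraph Finset

/-- `ReachIn G U a b` : `b` is reachable from `a` within the subgraph of `G`
induced on the vertex set `U`. -/
def ReachIn {n : ℕ} (G : SimpleGraph (Fin n)) (U : Finset (Fin n)) (a b : Fin n) : Prop :=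
  Relation.ReflTransGen (fun x y => G.Adj x y ∧ x ∈ U ∧ y ∈ U) a b

/-- `U` is admissible (with respect to `J₀`) if no connected component of the
subgraph of `G` induced on `U` is entirely contained in `J₀`: every component
contains a vertex outside `J₀`. -/
def Admissible {n : ℕ} (G : SimpleGraph (Fin n)) (J₀ U : Finset (Fin n)) : Prop :=
  ∀ a ∈ U, ∃ b, ReachIn G U a b ∧ b ∉ J₀

/-- A subset `A` is connected if the induced subgraph on `A` is connected. -/
def ConnIn {n : ℕ} (G : SimpleGraph (Fin n)) (A : Finset (Fin n)) : Prop :=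
  ∀ a ∈ A, ∀ b ∈ A, ReachIn G A a b

theorem ReachIn.mono {n : ℕ} {G : SimpleGraph (Fin n)} {U V : Finset (Fin n)} (h : U ⊆ V)
    {a b : Fin n} (hr : ReachIn G U a b) : ReachIn G V a b :=
  by
    unfold ReachIn at hr ⊢
    induction hr with
    | refl => exact Relation.ReflTransGen.refl
    | tail _ hxy ih => exact Relation.ReflTransGen.tail ih ⟨hxy.1, h hxy.2.1, h hxy.2.2⟩

theorem admissible_empty {n : ℕ} (G : SimpleGraph (Fin n)) (J₀ : Finset (Fin n)) :
    Admissible G J₀ ∅ := fun a ha => absurd ha (Finset.notMem_empty a)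

theorem admissible_union {n : ℕ} {G : SimpleGraph (Fin n)} {J₀ U V : Finset (Fin n)}
    (hU : Admissible G J₀ U) (hV : Admissible G J₀ V) : Admissible G J₀ (U ∪ V) := by
  intro a ha
  rcases Finset.mem_union.mp ha with h | h
  · obtain ⟨b, hb, hbJ⟩ := hU a h
    exact ⟨b, hb.mono Finset.subset_union_left, hbJ⟩
  · obtain ⟨b, hb, hbJ⟩ := hV a h
    exact ⟨b, hb.mono Finset.subset_union_right, hbJ⟩

/-- `Λ*(G, J₀)` : the poset of admissible subsets, ordered by inclusion. -/
def CrossSection {n : ℕ} (G : SimpleGraph (Fin n)) (J₀ : Finset (Fin n)) : Type :=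
  {U : Finset (Fin n) // Admissible G J₀ U}

namespace CrossSection

variable {n : ℕ} {G : SimpleGraph (Fin n)} {J₀ : Finset (Fin n)}

instance : PartialOrder (CrossSection G J₀) :=
  inferInstanceAs (PartialOrder {U : Finset (Fin n) // Admissible G J₀ U})

instance : DecidableEq (CrossSection G J₀) :=
  inferInstanceAs (DecidableEq {U : Finset (Fin n) // Admissible G J₀ U})

noncomputable instance : Fintype (CrossSection G J₀) :=
  Fintype.ofInjective (Subtype.val : CrossSection G J₀ → Finset (Fin n)) Subtype.val_injective

open Classical in
/-- The underlying set of the meet of two admissible sets: the largest admissible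
subset contained in the intersection. -/
noncomputable def meetFinset (G : SimpleGraph (Fin n)) (J₀ : Finset (Fin n))
    (U V : Finset (Fin n)) : Finset (Fin n) :=
  ((U ∩ V).powerset.filter (fun W => Admissible G J₀ W)).sup id

theorem admissible_sup {s : Finset (Finset (Fin n))}
    (h : ∀ W ∈ s, Admissible G J₀ W) : Admissible G J₀ (s.sup id) :=
  Finset.sup_induction (by simpa using admissible_empty G J₀)
    (fun a ha b hb => by simpa using admissible_union ha hb) h

theorem admissible_meetFinset (G : SimpleGraph (Fin n)) (J₀ U V : Finset (Fin n)) :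
    Admissible G J₀ (meetFinset G J₀ U V) := by
  classical
  exact admissible_sup (fun W hW => (Finset.mem_filter.mp hW).2)

theorem meetFinset_subset_left (G : SimpleGraph (Fin n)) (J₀ U V : Finset (Fin n)) :
    meetFinset G J₀ U V ≤ U := by
  classical
  unfold meetFinset
  refine Finset.sup_le (fun W hW => ?_)
  have := Finset.mem_powerset.mp (Finset.mem_filter.mp hW).1
  exact fun x hx => (Finset.mem_inter.mp (this hx)).1

theorem meetFinset_subset_right (G : SimpleGraph (Fin n)) (J₀ U V : Finset (Fin n)) :
    meetFinset G J₀ U V ≤ V := by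
  classical
  unfold meetFinset
  refine Finset.sup_le (fun W hW => ?_)
  have := Finset.mem_powerset.mp (Finset.mem_filter.mp hW).1
  exact fun x hx => (Finset.mem_inter.mp (this hx)).2

theorem subset_meetFinset {G : SimpleGraph (Fin n)} {J₀ U V W : Finset (Fin n)}
    (hW : Admissible G J₀ W) (h1 : W ⊆ U) (h2 : W ⊆ V) : W ≤ meetFinset G J₀ U V := by
  classical
  unfold meetFinset
  exact Finset.le_sup (f := id)
    (Finset.mem_filter.mpr ⟨Finset.mem_powerset.mpr (Finset.subset_inter h1 h2), hW⟩)

noncomputable instance : Lattice (CrossSection G J₀) :=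
  { (inferInstance : PartialOrder (CrossSection G J₀)) with
    sup := fun U V => ⟨U.1 ∪ V.1, admissible_union U.2 V.2⟩
    le_sup_left := fun U V => show U.1 ⊆ U.1 ∪ V.1 from Finset.subset_union_left
    le_sup_right := fun U V => show V.1 ⊆ U.1 ∪ V.1 from Finset.subset_union_right
    sup_le := fun U V W h1 h2 => show U.1 ∪ V.1 ⊆ W.1 from Finset.union_subset h1 h2
    inf := fun U V => ⟨meetFinset G J₀ U.1 V.1, admissible_meetFinset G J₀ U.1 V.1⟩
    inf_le_left := fun U V => meetFinset_subset_left G J₀ U.1 V.1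
    inf_le_right := fun U V => meetFinset_subset_right G J₀ U.1 V.1
    le_inf := fun W U V h1 h2 => subset_meetFinset W.2 h1 h2 }

instance : OrderBot (CrossSection G J₀) where
  bot := ⟨∅, admissible_empty G J₀⟩
  bot_le := fun U => show (∅ : Finset (Fin n)) ⊆ U.1 from Finset.empty_subset _

@[simp] theorem sup_val (U V : CrossSection G J₀) : (U ⊔ V).1 = U.1 ∪ V.1 := rfl

@[simp] theorem inf_val (U V : CrossSection G J₀) : (U ⊓ V).1 = meetFinset G J₀ U.1 V.1 := rfl

end CrossSection

/-- The interval `[u,w]` is relatively complemented: for every subinterval `[x,y]`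
and every `z` in it there is a relative complement `z'`. -/
def RelCompInterval {α : Type*} [Lattice α] (u w : α) : Prop :=
  ∀ x y z : α, u ≤ x → x ≤ z → z ≤ y → y ≤ w →
    ∃ z', x ≤ z' ∧ z' ≤ y ∧ z ⊔ z' = y ∧ z ⊓ z' = x

section AuxProof

variable {n : ℕ} {G : SimpleGraph (Fin n)} {J₀ : Finset (Fin n)}

open CrossSection

/-- The complement `x ∪ (y \ z)` is admissible when every `J₀`-vertex of `W \ U`
is adjacent to a vertex of `U`. -/
theorem relcomp_of_forall (U W : CrossSection G J₀)
    (H : ∀ α : Fin n, α ∈ J₀ → α ∈ W.1 → α ∉ U.1 → ∃ β ∈ U.1, G.Adj α β) :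
    RelCompInterval U W := by
  intro x y z hUx hxz hzy hyW
  classical
  have hadm : Admissible G J₀ (x.1 ∪ (y.1 \ z.1)) := by
    intro a ha
    by_contra hcon
    push_neg at hcon
    have key : ∀ c, c ∈ x.1 → ReachIn G (x.1 ∪ (y.1 \ z.1)) a c → False := by
      intro c hc hr
      obtain ⟨b, hb, hbJ⟩ := x.2 c hc
      exact hbJ (hcon b (hr.trans (hb.mono Finset.subset_union_left)))
    rcases Finset.mem_union.mp ha with hax | hayz
    · exact key a hax Relation.ReflTransGen.refl
    · have haJ : a ∈ J₀ := hcon a Relation.ReflTransGen.refl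
      have haW : a ∈ W.1 := hyW (Finset.mem_sdiff.mp hayz).1
      by_cases hax : a ∈ x.1
      · exact key a hax Relation.ReflTransGen.refl
      · have haU : a ∉ U.1 := fun h => hax (hUx h)
        obtain ⟨β, hβU, hβadj⟩ := H a haJ haW haU
        have hβx : β ∈ x.1 := hUx hβU
        exact key β hβx (Relation.ReflTransGen.single
          ⟨hβadj, ha, Finset.mem_union_left _ hβx⟩)
  refine ⟨⟨x.1 ∪ (y.1 \ z.1), hadm⟩, ?_, ?_, ?_, ?_⟩
  · exact Finset.subset_union_left
  · show x.1 ∪ (y.1 \ z.1) ⊆ y.1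
    exact Finset.union_subset (Finset.Subset.trans hxz hzy) (Finset.sdiff_subset)
  · apply Subtype.ext
    show z.1 ∪ (x.1 ∪ (y.1 \ z.1)) = y.1
    apply Finset.ext
    intro t
    simp only [Finset.mem_union, Finset.mem_sdiff]
    constructor
    · rintro (h | h | h)
      · exact hzy h
      · exact hzy (hxz h)
      · exact h.1
    · intro h
      by_cases ht : t ∈ z.1
      · exact Or.inl ht
      · exact Or.inr (Or.inr ⟨h, ht⟩)
  · apply Subtype.ext
    show meetFinset G J₀ z.1 (x.1 ∪ (y.1 \ z.1)) = x.1
    apply Finset.Subset.antisymm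
    · intro t ht
      have h1 : t ∈ z.1 := meetFinset_subset_left G J₀ _ _ ht
      have h2 : t ∈ x.1 ∪ (y.1 \ z.1) := meetFinset_subset_right G J₀ _ _ ht
      rcases Finset.mem_union.mp h2 with h | h
      · exact h
      · exact absurd h1 (Finset.mem_sdiff.mp h).2
    · exact subset_meetFinset x.2 hxz Finset.subset_union_left

/-- A walk of length `k` inside `Wf` starting at `α`. -/
def IsWalkFrom (G : SimpleGraph (Fin n)) (Wf : Finset (Fin n)) (α : Fin n)
    (k : ℕ) (f : ℕ → Fin n) : Prop :=
  f 0 = α ∧ (∀ i, i ≤ k → f i ∈ Wf) ∧ (∀ i, i < k → G.Adj (f i) (f (i + 1)))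

theorem exists_walk_of_reachIn {Wf : Finset (Fin n)} {a b : Fin n} (ha : a ∈ Wf)
    (h : ReachIn G Wf a b) :
    ∃ k f, IsWalkFrom G Wf a k f ∧ f k = b := by
  induction h with
  | refl =>
    exact ⟨0, fun _ => a, ⟨rfl, fun i _ => ha, fun i hi => absurd hi (Nat.not_lt_zero i)⟩, rfl⟩
  | @tail b' c hab hbc ih =>
    obtain ⟨k, f, ⟨h0, hmem, hadj⟩, hend⟩ := ih
    refine ⟨k + 1, fun i => if i ≤ k then f i else c, ⟨?_, ?_, ?_⟩, ?_⟩
    · simp only [if_pos (Nat.zero_le k)]; exact h0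
    · intro i hi
      by_cases h' : i ≤ k
      · simp only [if_pos h']; exact hmem i h'
      · simp only [if_neg h']; exact hbc.2.2
    · intro i hi
      by_cases h' : i + 1 ≤ k
      · simp only [if_pos (show i ≤ k by omega), if_pos h']
        exact hadj i (by omega)
      · have hik : i = k := by omega
        subst hik
        simp only [if_pos le_rfl, if_neg h', hend]
        exact hbc.1
    · simp only [if_neg (show ¬ k + 1 ≤ k by omega)]

theorem reach_of_chain {T : Finset (Fin n)} {f : ℕ → Fin n} {l r : ℕ} (hlr : l ≤ r)
    (hmem : ∀ m, l ≤ m → m ≤ r → f m ∈ T)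
    (hadj : ∀ m, l ≤ m → m < r → G.Adj (f m) (f (m + 1))) :
    ReachIn G T (f l) (f r) := by
  induction r, hlr using Nat.le_induction with
  | base => exact Relation.ReflTransGen.refl
  | succ r hlr ih =>
    exact (ih (fun m h1 h2 => hmem m h1 (by omega))
        (fun m h1 h2 => hadj m h1 (by omega))).tail
      ⟨hadj r hlr (by omega), hmem r hlr (by omega), hmem (r + 1) (by omega) le_rfl⟩

theorem no_relcomp_of_exists (U W : CrossSection G J₀) (hUW : U ≤ W)
    {α : Fin n} (hαJ : α ∈ J₀) (hαW : α ∈ W.1) (hαU : α ∉ U.1)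
    (hnadj : ∀ β ∈ U.1, ¬ G.Adj α β) : ¬ RelCompInterval U W := by
  intro hrc
  classical
  have hex : ∃ k, ∃ f, IsWalkFrom G W.1 α k f ∧ f k ∉ J₀ := by
    obtain ⟨b, hb, hbJ⟩ := W.2 α hαW
    obtain ⟨k, f, hw, he⟩ := exists_walk_of_reachIn hαW hb
    exact ⟨k, f, hw, he ▸ hbJ⟩
  set k₀ := Nat.find hex with hk₀def
  obtain ⟨f, ⟨h0, hmem, hadj⟩, hlast⟩ : ∃ f, IsWalkFrom G W.1 α k₀ f ∧ f k₀ ∉ J₀ :=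
    Nat.find_spec hex
  have hmin : ∀ m, m < k₀ → ∀ g, IsWalkFrom G W.1 α m g → g m ∈ J₀ := by
    intro m hm g hg
    by_contra h
    exact Nat.find_min hex hm ⟨g, hg, h⟩
  have hk1 : 1 ≤ k₀ := by
    by_contra h
    have hk0 : k₀ = 0 := by omega
    rw [hk0, h0] at hlast
    exact hlast hαJ
  have hJint : ∀ i, i < k₀ → f i ∈ J₀ := by
    intro i hi
    exact hmin i hi f ⟨h0, fun j hj => hmem j (by omega), fun j hj => hadj j (by omega)⟩
  -- surgery: shortcut a walk when f i is adjacent to f (i+1+d)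
  have surgery : ∀ i d, 1 ≤ d → i + 1 + d ≤ k₀ → G.Adj (f i) (f (i + 1 + d)) → False := by
    intro i d hd hle hseam
    have hW : IsWalkFrom G W.1 α (k₀ - d) (fun t => if t ≤ i then f t else f (t + d)) := by
      refine ⟨?_, ?_, ?_⟩
      · simp only [if_pos (Nat.zero_le i)]; exact h0
      · intro t ht
        by_cases h' : t ≤ i
        · simp only [if_pos h']; exact hmem t (by omega)
        · simp only [if_neg h']; exact hmem (t + d) (by omega)
      · intro t ht
        rcases Nat.lt_trichotomy t i with h' | h' | h'
        · simp only [if_pos h'.le, if_pos (by omega : t + 1 ≤ i)]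
          exact hadj t (by omega)
        · subst h'
          simp only [if_pos le_rfl, if_neg (by omega : ¬ t + 1 ≤ t)]
          have : t + 1 + d = t + 1 + d := rfl
          exact hseam
        · simp only [if_neg (by omega : ¬ t ≤ i), if_neg (by omega : ¬ t + 1 ≤ i)]
          have h2 : t + 1 + d = t + d + 1 := by omega
          rw [h2]
          exact hadj (t + d) (by omega)
    have hJ := hmin (k₀ - d) (by omega) _ hW
    simp only [if_neg (by omega : ¬ k₀ - d ≤ i)] at hJ
    rw [show k₀ - d + d = k₀ from by omega] at hJ
    exact hlast hJ
  have hinj : ∀ i j, i ≤ k₀ → j ≤ k₀ → f i = f j → i = j := by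
    have key : ∀ i j, i < j → j ≤ k₀ → f i = f j → False := by
      intro i j hij hjk heq
      rcases Nat.lt_or_ge j k₀ with hjlt | hjge
      · refine surgery i (j - i) (by omega) (by omega) ?_
        rw [show i + 1 + (j - i) = j + 1 from by omega, heq]
        exact hadj j hjlt
      · have : j = k₀ := by omega
        subst this
        exact hlast (heq ▸ hJint i hij)
    intro i j hi hj heq
    rcases Nat.lt_trichotomy i j with h | h | h
    · exact absurd heq (fun h' => key i j h hj h')
    · exact h
    · exact absurd heq.symm (fun h' => key j i h hi h')
  have hind : ∀ i j, i ≤ k₀ → j ≤ k₀ → G.Adj (f i) (f j) → j = i + 1 ∨ i = j + 1 := by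
    have key : ∀ i j, i < j → j ≤ k₀ → G.Adj (f i) (f j) → j = i + 1 := by
      intro i j hij hjk hA
      by_contra h
      refine surgery i (j - i - 1) (by omega) (by omega) ?_
      rw [show i + 1 + (j - i - 1) = j from by omega]
      exact hA
    intro i j hi hj hA
    rcases Nat.lt_trichotomy i j with h | h | h
    · exact Or.inl (key i j h hj hA)
    · exact absurd (h ▸ hA) (G.irrefl)
    · exact Or.inr (key j i h hi hA.symm)
  set S : Finset (Fin n) := (Finset.range (k₀ + 1)).image f with hSdef
  have hmemS : ∀ m, m ≤ k₀ → f m ∈ S := fun m hm =>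
    Finset.mem_image.mpr ⟨m, Finset.mem_range.mpr (by omega), rfl⟩
  have hSW : S ⊆ W.1 := by
    intro t ht
    obtain ⟨l, hl, rfl⟩ := Finset.mem_image.mp ht
    have := Finset.mem_range.mp hl
    exact hmem l (by omega)
  have hYadm : Admissible G J₀ (U.1 ∪ S) := by
    intro a ha
    rcases Finset.mem_union.mp ha with h | h
    · obtain ⟨b, hb, hbJ⟩ := U.2 a h
      exact ⟨b, hb.mono Finset.subset_union_left, hbJ⟩
    · obtain ⟨l, hl, rfl⟩ := Finset.mem_image.mp h
      have hl' : l ≤ k₀ := by have := Finset.mem_range.mp hl; omega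
      refine ⟨f k₀, reach_of_chain hl' ?_ ?_, hlast⟩
      · intro m h1 h2
        exact Finset.mem_union_right _ (hmemS m h2)
      · intro m h1 h2
        exact hadj m h2
  have hZadm : Admissible G J₀ (U.1 ∪ S.erase α) := by
    intro a ha
    rcases Finset.mem_union.mp ha with h | h
    · obtain ⟨b, hb, hbJ⟩ := U.2 a h
      exact ⟨b, hb.mono Finset.subset_union_left, hbJ⟩
    · obtain ⟨hne, hS⟩ := Finset.mem_erase.mp h
      obtain ⟨l, hl, rfl⟩ := Finset.mem_image.mp hS
      have hl' : l ≤ k₀ := by have := Finset.mem_range.mp hl; omega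
      have hl1 : 1 ≤ l := by
        rcases Nat.eq_zero_or_pos l with h' | h'
        · exact absurd (h' ▸ h0) hne
        · exact h'
      refine ⟨f k₀, reach_of_chain hl' ?_ ?_, hlast⟩
      · intro m h1 h2
        refine Finset.mem_union_right _ (Finset.mem_erase.mpr ⟨?_, hmemS m h2⟩)
        intro hfm
        have : m = 0 := hinj m 0 (by omega) (by omega) (hfm.trans h0.symm)
        omega
      · intro m h1 h2
        exact hadj m h2
  set Y : CrossSection G J₀ := ⟨U.1 ∪ S, hYadm⟩ with hYdef
  set Z : CrossSection G J₀ := ⟨U.1 ∪ S.erase α, hZadm⟩ with hZdef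
  obtain ⟨z', hxz', hz'y, hsup, hinf⟩ :=
    hrc U Y Z le_rfl (show U.1 ⊆ Z.1 from Finset.subset_union_left)
      (show Z.1 ⊆ Y.1 from Finset.union_subset_union_right (Finset.erase_subset _ _))
      (show Y.1 ⊆ W.1 from Finset.union_subset hUW hSW)
  have hsupv : Z.1 ∪ z'.1 = Y.1 := congrArg Subtype.val hsup
  have hinfv : meetFinset G J₀ Z.1 z'.1 = U.1 := congrArg Subtype.val hinf
  have hαz' : α ∈ z'.1 := by
    have hαY : α ∈ Y.1 := Finset.mem_union_right _ (h0 ▸ hmemS 0 (by omega))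
    rw [← hsupv] at hαY
    rcases Finset.mem_union.mp hαY with h | h
    · rcases Finset.mem_union.mp h with h' | h'
      · exact absurd h' hαU
      · exact absurd rfl (Finset.mem_erase.mp h').1
    · exact h
  -- least index where the "good" condition fails
  have hQex : ∃ i, 1 ≤ i ∧ ¬ (f i ∈ z'.1 ∧ f i ∈ J₀ ∧ ∀ β ∈ U.1, ¬ G.Adj (f i) β) := by
    refine ⟨k₀, hk1, fun h => hlast h.2.1⟩
  set istar := Nat.find hQex with histardef
  obtain ⟨histar1, histarfail⟩ : 1 ≤ istar ∧
      ¬ (f istar ∈ z'.1 ∧ f istar ∈ J₀ ∧ ∀ β ∈ U.1, ¬ G.Adj (f istar) β) := Nat.find_spec hQex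
  have histark : istar ≤ k₀ := Nat.find_min' hQex ⟨hk1, fun h => hlast h.2.1⟩
  have hprop : ∀ l, l < istar → f l ∈ z'.1 ∧ f l ∈ J₀ ∧ ∀ β ∈ U.1, ¬ G.Adj (f l) β := by
    intro l hl
    rcases Nat.eq_zero_or_pos l with h' | h'
    · subst h'; rw [h0]; exact ⟨hαz', hαJ, hnadj⟩
    · have := Nat.find_min hQex hl
      push_neg at this
      exact this h'
  by_cases hz : f istar ∈ z'.1
  · -- Case B : f istar ∈ z', so it is not in J₀ or is adjacent to U
    have hB : f istar ∉ J₀ ∨ ∃ β ∈ U.1, G.Adj (f istar) β := by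
      by_contra h
      push_neg at h
      exact histarfail ⟨hz, h.1, h.2⟩
    set A : Finset (Fin n) := U.1 ∪ (Finset.range istar).image (fun l => f (l + 1)) with hAdef
    have memA : ∀ m, 1 ≤ m → m ≤ istar → f m ∈ A := by
      intro m h1 h2
      refine Finset.mem_union_right _ (Finset.mem_image.mpr ⟨m - 1, ?_, ?_⟩)
      · exact Finset.mem_range.mpr (by omega)
      · rw [show m - 1 + 1 = m from by omega]
    have hiA : f istar ∈ A := memA istar histar1 le_rfl
    have hAz' : A ⊆ z'.1 := by
      intro t ht
      rcases Finset.mem_union.mp ht with h | h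
      · exact hxz' h
      · obtain ⟨l, hl, rfl⟩ := Finset.mem_image.mp h
        have hl' : l < istar := Finset.mem_range.mp hl
        rcases Nat.lt_or_ge (l + 1) istar with h' | h'
        · exact (hprop (l + 1) h').1
        · have : l + 1 = istar := by omega
          exact this ▸ hz
    have hAZ : A ⊆ Z.1 := by
      intro t ht
      rcases Finset.mem_union.mp ht with h | h
      · exact Finset.mem_union_left _ h
      · obtain ⟨l, hl, rfl⟩ := Finset.mem_image.mp h
        have hl' : l < istar := Finset.mem_range.mp hl
        refine Finset.mem_union_right _ (Finset.mem_erase.mpr ⟨?_, hmemS (l + 1) (by omega)⟩)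
        intro hfm
        have : l + 1 = 0 := hinj (l + 1) 0 (by omega) (by omega) (hfm.trans h0.symm)
        omega
    have hAadm : Admissible G J₀ A := by
      intro a ha
      rcases Finset.mem_union.mp ha with h | h
      · obtain ⟨b, hb, hbJ⟩ := U.2 a h
        exact ⟨b, hb.mono Finset.subset_union_left, hbJ⟩
      · obtain ⟨l, hl, rfl⟩ := Finset.mem_image.mp h
        have hl' : l < istar := Finset.mem_range.mp hl
        have hreach : ReachIn G A (f (l + 1)) (f istar) := by
          refine reach_of_chain (by omega) ?_ ?_
          · intro m h1 h2
            exact memA m (by omega) h2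
          · intro m h1 h2
            exact hadj m (by omega)
        rcases hB with hB | ⟨β, hβU, hβadj⟩
        · exact ⟨f istar, hreach, hB⟩
        · obtain ⟨b, hb, hbJ⟩ := U.2 β hβU
          refine ⟨b, ?_, hbJ⟩
          exact (hreach.tail ⟨hβadj, hiA, Finset.mem_union_left _ hβU⟩).trans
            (hb.mono Finset.subset_union_left)
    have hAU : A ⊆ U.1 := by
      rw [← hinfv]
      exact subset_meetFinset hAadm hAZ hAz'
    have hf1U : f 1 ∈ U.1 := hAU (memA 1 le_rfl histar1)
    exact hnadj (f 1) hf1U (h0 ▸ hadj 0 (by omega))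
  · -- Case A : f istar ∉ z'
    have hreach : ∀ c, ReachIn G z'.1 α c → ∃ l, l < istar ∧ c = f l := by
      intro c hc
      induction hc with
      | refl => exact ⟨0, by omega, h0.symm⟩
      | @tail c d hac hcd ih =>
        obtain ⟨l, hl, rfl⟩ := ih
        have hdY : d ∈ Y.1 := hz'y hcd.2.2
        rcases Finset.mem_union.mp hdY with hdU | hdS
        · exact absurd hcd.1 ((hprop l hl).2.2 d hdU)
        · obtain ⟨m, hm, rfl⟩ := Finset.mem_image.mp hdS
          have hm' : m ≤ k₀ := by have := Finset.mem_range.mp hm; omega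
          rcases hind l m (by omega) hm' hcd.1 with h | h
          · rcases Nat.lt_or_ge m istar with h' | h'
            · exact ⟨m, h', rfl⟩
            · have : m = istar := by omega
              exact absurd (this ▸ hcd.2.2) hz
          · exact ⟨m, by omega, rfl⟩
    obtain ⟨b, hb, hbJ⟩ := z'.2 α hαz'
    obtain ⟨l, hl, rfl⟩ := hreach b hb
    exact hbJ (hprop l hl).2.1

end AuxProof

theorem stmt_5 (n : ℕ) (hn : 1 ≤ n) (J₀ : Finset (Fin n))
    (U W : CrossSection (pathGraph n) J₀) (hUW : U ≤ W) :
    RelCompInterval U W ↔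
      ¬ ∃ α : Fin n, α ∈ J₀ ∧ α ∈ W.1 ∧ α ∉ U.1 ∧
          ∀ β ∈ U.1, ¬ (pathGraph n).Adj α β := by
  constructor
  · intro hrc
    rintro ⟨α, hJ, hW, hU, hna⟩
    exact no_relcomp_of_exists U W hUW hJ hW hU hna hrc
  · intro h
    apply relcomp_of_forall U W
    intro α h1 h2 h3
    by_contra hc
    push_neg at hc
    exact h ⟨α, h1, h2, h3, hc⟩
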